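/- Let h : ℝ → ℝ be four times continuously differentiable in a neighborhood of x ∈ ℝ. Then the third-order flux approximation from three consecutive cell averages satisfies −(1/6)·h̄₋ + (5/6)·h̄₀ + (1/3)·h̄₊ = h(x) + (1/12)·h'''(x)·Δx³ + O(Δx⁴). -/

import Mathlib

open Set intervalIntegral MeasureTheory

lemma myIDW_eq {f : ℝ → ℝ} {u s : Set ℝ} (hu : IsOpen u) (hsu : s ⊆ u)
    (hs : UniqueDiffOn ℝ s) {n : WithTop ℕ∞} (hf : ContDiffOn ℝ n f u) {k : ℕ}
    (hk : (k : WithTop ℕ∞) ≤ n) {y : ℝ} (hy : y ∈ s) :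
    iteratedDerivWithin k f s y = iteratedDeriv k f y := by
  have H := (hf.ftaylorSeriesWithin hu.uniqueDiffOn).mono hsu
  have h1 : ftaylorSeriesWithin ℝ f u y k = iteratedFDerivWithin ℝ k f s y :=
    H.eq_iteratedFDerivWithin_of_uniqueDiffOn hk hs hy
  have h2 : ftaylorSeriesWithin ℝ f u y k = iteratedFDeriv ℝ k f y :=
    iteratedFDerivWithin_of_isOpen k hu (hsu hy)
  rw [iteratedDerivWithin_eq_iteratedFDerivWithin, iteratedDeriv_eq_iteratedFDeriv, ← h1, h2]

lemma taylor4_bound (h : ℝ → ℝ) (x : ℝ) (hh : ContDiffAt ℝ 4 h x) :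
    ∃ M > 0, ∃ ε > 0, ContinuousOn h (Set.Icc (x - ε) (x + ε)) ∧
      ∀ ξ ∈ Set.Icc (x - ε) (x + ε),
        |h ξ - ∑ k ∈ Finset.range 4, iteratedDeriv k h x / (Nat.factorial k) * (ξ - x) ^ k|
          ≤ M * (ξ - x) ^ 4 := by
  obtain ⟨u, hu_mem, hu⟩ := hh.contDiffOn le_rfl (by simp)
  set v : Set ℝ := interior u with hv_def
  have hv_open : IsOpen v := isOpen_interior
  have hxv : x ∈ v := mem_interior_iff_mem_nhds.2 hu_mem
  have hv : ContDiffOn ℝ 4 h v := hu.mono interior_subset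
  obtain ⟨r, hr, hball⟩ := Metric.isOpen_iff.mp hv_open x hxv
  set ε : ℝ := r / 2 with hε_def
  have hε : 0 < ε := by positivity
  have hsub : Set.Icc (x - ε) (x + ε) ⊆ v := by
    intro ξ hξ
    apply hball
    have h1 : |ξ - x| ≤ ε := abs_sub_le_iff.2 ⟨by linarith [hξ.2], by linarith [hξ.1]⟩
    rw [Metric.mem_ball, Real.dist_eq]
    linarith
  set s : Set ℝ := Set.Icc (x - ε) (x + ε) with hs_def
  have hxε : x - ε < x + ε := by linarith
  have huds : UniqueDiffOn ℝ s := uniqueDiffOn_Icc hxε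
  have hcont4 : ContinuousOn (iteratedDeriv 4 h) s := by
    refine ((hv.mono hsub).continuousOn_iteratedDerivWithin le_rfl huds).congr ?_
    intro y hy
    exact (myIDW_eq hv_open hsub huds hv le_rfl hy).symm
  obtain ⟨M0, hM0⟩ := isCompact_Icc.exists_bound_of_continuousOn hcont4
  set M : ℝ := max M0 1 with hM_def
  have hM : 0 < M := lt_of_lt_of_le one_pos (le_max_right _ _)
  have hM0M : ∀ y ∈ s, |iteratedDeriv 4 h y| ≤ M := fun y hy =>
    (hM0 y hy).trans (le_max_left _ _)
  refine ⟨M, hM, ε, hε, (hv.continuousOn).mono hsub, ?_⟩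
  intro ξ hξ
  have hIccR : Set.Icc x (x + ε) ⊆ s := fun y hy => ⟨by linarith [hy.1], hy.2⟩
  have hc3 : ContDiffOn ℝ 4 h (Set.Icc x (x + ε)) := hv.mono (hIccR.trans hsub)
  have hxxe : x < x + ε := by linarith
  have hudR : UniqueDiffOn ℝ (Set.Icc x (x + ε)) := uniqueDiffOn_Icc hxxe
  rcases le_total x ξ with hxi | hxi
  · -- right side
    have hCR : ∀ y ∈ Set.Icc x (x + ε),
        ‖iteratedDerivWithin 4 h (Set.Icc x (x + ε)) y‖ ≤ M := by
      intro y hy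
      rw [Real.norm_eq_abs, myIDW_eq hv_open (hIccR.trans hsub) hudR hv le_rfl hy]
      exact hM0M y (hIccR hy)
    have hmem : ξ ∈ Set.Icc x (x + ε) := ⟨hxi, hξ.2⟩
    have hb := taylor_mean_remainder_bound (n := 3) hxxe.le hc3 hmem hCR
    have htayR : taylorWithinEval h 3 (Set.Icc x (x + ε)) x ξ =
        ∑ k ∈ Finset.range 4, iteratedDeriv k h x / (Nat.factorial k) * (ξ - x) ^ k := by
      rw [taylor_within_apply]
      refine Finset.sum_congr rfl fun k hk => ?_
      rw [myIDW_eq hv_open (hIccR.trans hsub) hudR hv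
        (by exact_mod_cast (Finset.mem_range.mp hk).le : (k : WithTop ℕ∞) ≤ 4)
        (Set.left_mem_Icc.2 hxxe.le), smul_eq_mul]
      ring
    rw [htayR, Real.norm_eq_abs] at hb
    have h4 : (0:ℝ) ≤ M * (ξ - x) ^ 4 := by positivity
    refine hb.trans ?_
    norm_num [Nat.factorial]
    linarith
  · -- left side via reflection
    set g : ℝ → ℝ := fun t => h (2 * x - t) with hg_def
    have hgder : ∀ (k : ℕ) (t : ℝ), iteratedDeriv k g t
        = (-1 : ℝ) ^ k * iteratedDeriv k h (2 * x - t) := by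
      intro k t
      have e1 : g = fun a => (fun z => h (2 * x + z)) (-a) := by
        funext a; simp only [hg_def, sub_eq_add_neg]
      have h3 : iteratedDeriv k (fun z => h (2 * x + z)) (-t) = iteratedDeriv k h (2 * x + -t) :=
        congrFun (iteratedDeriv_comp_const_add k h (2 * x)) (-t)
      rw [e1]
      exact (iteratedDeriv_comp_neg k (fun z => h (2 * x + z)) t).trans
        (by rw [h3, smul_eq_mul, sub_eq_add_neg])
    have hrefl : ∀ t ∈ Set.Icc x (x + ε), 2 * x - t ∈ s := by
      intro t ht
      exact ⟨by linarith [ht.2], by linarith [ht.1]⟩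
    set v' : Set ℝ := (fun t => 2 * x - t) ⁻¹' v with hv'_def
    have hv'_open : IsOpen v' := hv_open.preimage (by continuity)
    have hgc : ContDiffOn ℝ 4 g v' :=
      hv.comp ((contDiff_const.sub contDiff_id).contDiffOn) (fun t ht => ht)
    have hsubg : Set.Icc x (x + ε) ⊆ v' := fun t ht => hsub (hrefl t ht)
    have hCg : ∀ y ∈ Set.Icc x (x + ε),
        ‖iteratedDerivWithin 4 g (Set.Icc x (x + ε)) y‖ ≤ M := by
      intro y hy
      rw [Real.norm_eq_abs, myIDW_eq hv'_open hsubg hudR hgc le_rfl hy, hgder, abs_mul,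
        abs_pow, abs_neg, abs_one, one_pow, one_mul]
      exact hM0M _ (hrefl y hy)
    set t : ℝ := 2 * x - ξ with ht_def
    have hmem : t ∈ Set.Icc x (x + ε) := by
      rw [Set.mem_Icc, ht_def]
      constructor <;> [linarith [hξ.2]; linarith [hξ.1]]
    have hb := taylor_mean_remainder_bound (n := 3) hxxe.le (hgc.mono hsubg) hmem hCg
    have hgt : g t = h ξ := by
      rw [hg_def]; simp only [ht_def]; norm_num
    have htay : taylorWithinEval g 3 (Set.Icc x (x + ε)) x t
        = ∑ k ∈ Finset.range 4, iteratedDeriv k h x / (Nat.factorial k) * (ξ - x) ^ k := by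
      rw [taylor_within_apply]
      refine Finset.sum_congr rfl fun k hk => ?_
      rw [myIDW_eq hv'_open hsubg hudR hgc
        (by exact_mod_cast (Finset.mem_range.mp hk).le : (k : WithTop ℕ∞) ≤ 4)
        (Set.left_mem_Icc.2 hxxe.le), hgder, smul_eq_mul]
      have e2 : (2:ℝ) * x - x = x := by ring
      rw [e2]
      have e : ((-1:ℝ)) ^ k * (t - x) ^ k = (ξ - x) ^ k := by
        rw [← neg_pow, ht_def]; ring_nf
      calc (((Nat.factorial k) : ℝ)⁻¹ * (t - x) ^ k) * ((-1:ℝ)^k * iteratedDeriv k h x)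
          = iteratedDeriv k h x * ((Nat.factorial k) :ℝ)⁻¹ * ((-1:ℝ)^k * (t - x)^k) := by ring
        _ = iteratedDeriv k h x / (Nat.factorial k) * (ξ - x) ^ k := by rw [e]; ring
    rw [hgt, htay, Real.norm_eq_abs] at hb
    have e4 : (t - x) ^ 4 = (ξ - x) ^ 4 := by rw [ht_def]; ring
    rw [e4] at hb
    have h4 : (0:ℝ) ≤ M * (ξ - x) ^ 4 := by positivity
    refine hb.trans ?_
    norm_num [Nat.factorial]
    linarith

lemma myPolyDeriv (c0 c1 c2 c3 x : ℝ) : ∀ t : ℝ,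
    HasDerivAt (fun ξ => c0 * (ξ - x) + c1 / 2 * (ξ - x) ^ 2 + c2 / 6 * (ξ - x) ^ 3
      + c3 / 24 * (ξ - x) ^ 4)
      (c0 + c1 * (t - x) + c2 / 2 * (t - x) ^ 2 + c3 / 6 * (t - x) ^ 3) t := by
  intro t
  have hid : HasDerivAt (fun ξ : ℝ => ξ - x) 1 t := (hasDerivAt_id t).sub_const x
  have h1 := (hid.pow 1).const_mul c0
  have h2 := (hid.pow 2).const_mul (c1 / 2)
  have h3 := (hid.pow 3).const_mul (c2 / 6)
  have h4 := (hid.pow 4).const_mul (c3 / 24)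
  have := ((h1.add h2).add h3).add h4
  refine (this.congr_deriv (by push_cast; ring)).congr_of_eventuallyEq ?_
  exact Filter.Eventually.of_forall fun ξ => by simp only [Pi.add_apply, Pi.pow_apply]; ring

lemma myPolyCont (c0 c1 c2 c3 x : ℝ) :
    Continuous (fun ξ : ℝ => c0 + c1 * (ξ - x) + c2 / 2 * (ξ - x) ^ 2 + c3 / 6 * (ξ - x) ^ 3) := by
  fun_prop

lemma myPolyInt (c0 c1 c2 c3 x a b : ℝ) :
    ∫ ξ in a..b, (c0 + c1 * (ξ - x) + c2 / 2 * (ξ - x) ^ 2 + c3 / 6 * (ξ - x) ^ 3)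
      = (c0 * (b - x) + c1 / 2 * (b - x) ^ 2 + c2 / 6 * (b - x) ^ 3 + c3 / 24 * (b - x) ^ 4)
        - (c0 * (a - x) + c1 / 2 * (a - x) ^ 2 + c2 / 6 * (a - x) ^ 3 + c3 / 24 * (a - x) ^ 4) := by
  exact intervalIntegral.integral_eq_sub_of_hasDerivAt
    (fun t _ => myPolyDeriv c0 c1 c2 c3 x t)
    ((myPolyCont c0 c1 c2 c3 x).intervalIntegrable a b)

lemma myPolyAvg (c0 c1 c2 c3 x d : ℝ) (hd : d ≠ 0) :
    -(1 / 6) * ((1 / d) * ∫ ξ in (x - 2 * d)..(x - d),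
        (c0 + c1 * (ξ - x) + c2 / 2 * (ξ - x) ^ 2 + c3 / 6 * (ξ - x) ^ 3))
      + (5 / 6) * ((1 / d) * ∫ ξ in (x - d)..x,
        (c0 + c1 * (ξ - x) + c2 / 2 * (ξ - x) ^ 2 + c3 / 6 * (ξ - x) ^ 3))
      + (1 / 3) * ((1 / d) * ∫ ξ in x..(x + d),
        (c0 + c1 * (ξ - x) + c2 / 2 * (ξ - x) ^ 2 + c3 / 6 * (ξ - x) ^ 3))
      = c0 + (1 / 12) * c3 * d ^ 3 := by
  rw [myPolyInt, myPolyInt, myPolyInt]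
  field_simp
  ring

/-- Third-order flux approximation from three consecutive cell averages:
`−(1/6)h̄₋ + (5/6)h̄₀ + (1/3)h̄₊ = h(x) + (1/12)h'''(x)Δx³ + O(Δx⁴)`. -/
theorem stmt_10 (h : ℝ → ℝ) (x : ℝ) (hh : ContDiffAt ℝ 4 h x) :
    ∃ C > 0, ∃ d₀ > 0, ∀ d : ℝ, 0 < d → d < d₀ →
      |-(1 / 6) * ((1 / d) * ∫ ξ in (x - 2 * d)..(x - d), h ξ)
          + (5 / 6) * ((1 / d) * ∫ ξ in (x - d)..x, h ξ)
          + (1 / 3) * ((1 / d) * ∫ ξ in x..(x + d), h ξ)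
          - h x - (1 / 12) * iteratedDeriv 3 h x * d ^ 3|
        ≤ C * d ^ 4 := by
  obtain ⟨M, hM, ε, hε, hcont, htay⟩ := taylor4_bound h x hh
  set c1 := iteratedDeriv 1 h x with hc1
  set c2 := iteratedDeriv 2 h x with hc2
  set c3 := iteratedDeriv 3 h x with hc3
  set P : ℝ → ℝ := fun ξ =>
    h x + c1 * (ξ - x) + c2 / 2 * (ξ - x) ^ 2 + c3 / 6 * (ξ - x) ^ 3 with hP_def
  have hPb : ∀ ξ ∈ Set.Icc (x - ε) (x + ε), |h ξ - P ξ| ≤ M * (ξ - x) ^ 4 := by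
    intro ξ hξ
    have hb := htay ξ hξ
    have hsum : ∑ k ∈ Finset.range 4,
        iteratedDeriv k h x / (Nat.factorial k) * (ξ - x) ^ k = P ξ := by
      rw [Finset.sum_range_succ, Finset.sum_range_succ, Finset.sum_range_succ,
        Finset.sum_range_one, hP_def]
      simp [Nat.factorial, iteratedDeriv_zero, ← hc1, ← hc2, ← hc3]
    rwa [hsum] at hb
  refine ⟨64 * M, by positivity, ε / 2, by positivity, ?_⟩
  intro d hd hdε
  have hd0 : d ≠ 0 := ne_of_gt hd
  have hintP : ∀ a b : ℝ, IntervalIntegrable P volume a b := fun a b =>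
    (myPolyCont (h x) c1 c2 c3 x).intervalIntegrable a b
  have cellbound : ∀ a b : ℝ, a ≤ b → b - a = d → x - 2 * d ≤ a → b ≤ x + d →
      |(∫ ξ in a..b, h ξ) - ∫ ξ in a..b, P ξ| ≤ 16 * M * d ^ 4 * d := by
    intro a b hab hba h1 h2
    have habs2d : ∀ ξ ∈ Set.uIoc a b, |ξ - x| ≤ 2 * d := by
      intro ξ hξ
      rw [Set.uIoc_of_le hab] at hξ
      rw [abs_le]
      constructor <;> [linarith [hξ.1.le]; linarith [hξ.2]]
    have hIccsub : Set.uIcc a b ⊆ Set.Icc (x - ε) (x + ε) := by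
      rw [Set.uIcc_of_le hab]
      intro y hy
      constructor <;> [linarith [hy.1]; linarith [hy.2]]
    have hInth : IntervalIntegrable h volume a b :=
      (hcont.mono hIccsub).intervalIntegrable
    have heq : (∫ ξ in a..b, h ξ) - ∫ ξ in a..b, P ξ = ∫ ξ in a..b, (h ξ - P ξ) :=
      (intervalIntegral.integral_sub hInth (hintP a b)).symm
    rw [heq]
    have hnb := intervalIntegral.norm_integral_le_of_norm_le_const
      (C := 16 * M * d ^ 4) (f := fun ξ => h ξ - P ξ) (a := a) (b := b) ?_
    · rw [Real.norm_eq_abs] at hnb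
      have habd : |b - a| = d := by rw [hba, abs_of_pos hd]
      rw [habd] at hnb
      exact hnb
    · intro ξ hξ
      have h2d : |ξ - x| ≤ 2 * d := habs2d ξ hξ
      have h2d' := abs_le.mp h2d
      have hξIcc : ξ ∈ Set.Icc (x - ε) (x + ε) := by
        constructor <;> [linarith [h2d'.1]; linarith [h2d'.2]]
      rw [Real.norm_eq_abs]
      refine (hPb ξ hξIcc).trans ?_
      have hp4 : (ξ - x) ^ 4 ≤ 16 * d ^ 4 := by
        have e1 : (ξ - x) ^ 4 = |ξ - x| ^ 4 := by
          rw [← abs_pow, abs_of_nonneg (by positivity)]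
        have e2 : |ξ - x| ^ 4 ≤ (2 * d) ^ 4 :=
          pow_le_pow_left₀ (abs_nonneg _) h2d 4
        rw [e1]
        calc |ξ - x| ^ 4 ≤ (2 * d) ^ 4 := e2
          _ = 16 * d ^ 4 := by ring
      calc M * (ξ - x) ^ 4 ≤ M * (16 * d ^ 4) :=
            mul_le_mul_of_nonneg_left hp4 hM.le
        _ = 16 * M * d ^ 4 := by ring
  -- error bounds for the three cells
  have e1 := cellbound (x - 2 * d) (x - d) (by linarith) (by ring) (by linarith) (by linarith)
  have e2 := cellbound (x - d) x (by linarith) (by ring) (by linarith) (by linarith)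
  have e3 := cellbound x (x + d) (by linarith) (by ring) (by linarith) (by linarith)
  have hDD := myPolyAvg (h x) c1 c2 c3 x d hd0
  have key : ∀ (coef Eh EP : ℝ), |Eh - EP| ≤ 16 * M * d ^ 4 * d → |coef| ≤ 1 →
      |coef * ((1 / d) * (Eh - EP))| ≤ 16 * M * d ^ 4 := by
    intro coef Eh EP hE hc
    rw [abs_mul, abs_mul, abs_of_pos (show (0:ℝ) < 1 / d by positivity)]
    calc |coef| * (1 / d * |Eh - EP|)
        ≤ 1 * (1 / d * (16 * M * d ^ 4 * d)) := by
          apply mul_le_mul hc (mul_le_mul_of_nonneg_left hE (by positivity))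
            (by positivity) one_pos.le
      _ = 16 * M * d ^ 4 := by field_simp
  have hexpand :
      -(1 / 6) * ((1 / d) * ∫ ξ in (x - 2 * d)..(x - d), h ξ)
          + (5 / 6) * ((1 / d) * ∫ ξ in (x - d)..x, h ξ)
          + (1 / 3) * ((1 / d) * ∫ ξ in x..(x + d), h ξ)
          - h x - (1 / 12) * c3 * d ^ 3
        = -(1 / 6) * ((1 / d) * ((∫ ξ in (x - 2 * d)..(x - d), h ξ)
              - ∫ ξ in (x - 2 * d)..(x - d), P ξ))
          + (5 / 6) * ((1 / d) * ((∫ ξ in (x - d)..x, h ξ) - ∫ ξ in (x - d)..x, P ξ))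
          + (1 / 3) * ((1 / d) * ((∫ ξ in x..(x + d), h ξ) - ∫ ξ in x..(x + d), P ξ)) := by
    simp only [hP_def]
    linear_combination hDD
  rw [hexpand]
  have t1 := key (-(1 / 6)) _ _ e1 (by rw [abs_le]; constructor <;> norm_num)
  have t2 := key (5 / 6) _ _ e2 (by rw [abs_le]; constructor <;> norm_num)
  have t3 := key (1 / 3) _ _ e3 (by rw [abs_le]; constructor <;> norm_num)
  set A := -(1 / 6) * ((1 / d) * ((∫ ξ in (x - 2 * d)..(x - d), h ξ)
      - ∫ ξ in (x - 2 * d)..(x - d), P ξ)) with hA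
  set B := (5 / 6) * ((1 / d) * ((∫ ξ in (x - d)..x, h ξ) - ∫ ξ in (x - d)..x, P ξ)) with hB
  set Cc := (1 / 3) * ((1 / d) * ((∫ ξ in x..(x + d), h ξ) - ∫ ξ in x..(x + d), P ξ)) with hCc
  have hMd : 0 < M * d ^ 4 := by positivity
  calc |A + B + Cc| ≤ |A + B| + |Cc| := abs_add_le _ _
    _ ≤ |A| + |B| + |Cc| := by linarith [abs_add_le A B]
    _ ≤ 64 * M * d ^ 4 := by linarith [t1, t2, t3]
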